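/- arXiv:1306.2385 — 8 statements merged into one kernel-verified Lean document; each statement's English description precedes it below -/
import Mathlib

section
/- Every finitely generated subgroup of GL_n(K), for K a field, is residually finite. -/
set_option maxHeartbeats 1000000

section Aux

instance int_isJacobsonRing : IsJacobsonRing ℤ := by
  rw [isJacobsonRing_iff_prime_eq]
  intro P hP
  rcases eq_or_ne P ⊥ with rfl | hbot
  · refine le_antisymm ?_ Ideal.le_jacobson
    intro x hx
    by_contra hx0
    have hx0' : x ≠ 0 := fun h => hx0 (h ▸ Ideal.zero_mem _)
    obtain ⟨p, hple, hp⟩ := Nat.exists_infinite_primes (x.natAbs + 1)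
    have hpZ : Prime (p : ℤ) := Nat.prime_iff_prime_int.mp hp
    have hmax : (Ideal.span {(p : ℤ)}).IsMaximal :=
      PrincipalIdealRing.isMaximal_of_irreducible hpZ.irreducible
    have hmem : x ∈ Ideal.span {(p : ℤ)} :=
      Ideal.mem_sInf.mp hx ⟨bot_le, hmax⟩
    rw [Ideal.mem_span_singleton] at hmem
    have h1 : (p : ℤ) ≤ |x| := Int.le_of_dvd (abs_pos.mpr hx0') ((dvd_abs _ _).mpr hmem)
    rw [Int.abs_eq_natAbs] at h1
    omega
  · exact Ideal.jacobson_eq_self_of_isMaximal (H := hP.isMaximal hbot)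

/-- A field which is finite as a `ℤ`-module is finite. -/
theorem finite_of_field_of_moduleFinite (L : Type*) [Field L] [Module.Finite ℤ L] :
    Finite L := by
  have hint : Algebra.IsIntegral ℤ L := Algebra.IsIntegral.of_finite ℤ L
  have hnc : ¬ CharZero L := by
    intro h
    have hinj : Function.Injective (algebraMap ℤ L) := by
      intro a b hab
      simpa [algebraMap_int_eq, eq_intCast, Int.cast_inj] using hab
    exact Int.not_isField (isField_of_isIntegral_of_isField hinj (Field.toIsField L))
  set p := ringChar L with hp
  have hcp : CharP L p := ringChar.charP L
  have hpne : p ≠ 0 := by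
    intro h
    haveI : CharP L 0 := h ▸ hcp
    exact hnc (CharP.charP_to_charZero L)
  haveI : NeZero p := ⟨hpne⟩
  letI : Algebra (ZMod p) L := ZMod.algebra L p
  haveI : Module.Finite (ZMod p) L := Module.Finite.of_restrictScalars_finite ℤ (ZMod p) L
  exact Module.finite_of_finite (ZMod p)

end Aux

/-- Malcev's theorem: every finitely generated subgroup of `GL n K`, for `K` a field,
is residually finite. -/
theorem malcev_residually_finite (n : ℕ) (K : Type*) [Field K]
    (G : Subgroup (GL (Fin n) K)) (hfg : Group.FG G) :
    ∀ g : G, g ≠ 1 →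
      ∃ (Q : Type) (_ : Group Q), Finite Q ∧ ∃ f : G →* Q, f g ≠ 1 := by
  classical
  obtain ⟨S, hS⟩ := hfg.out
  -- the set of all entries of the generators and their inverses
  set E : Set K :=
    ⋃ s ∈ (S : Set G),
      (Set.range fun p : Fin n × Fin n => ((s : GL (Fin n) K) : Matrix (Fin n) (Fin n) K) p.1 p.2)
      ∪ (Set.range fun p : Fin n × Fin n =>
          (((s⁻¹ : G) : GL (Fin n) K) : Matrix (Fin n) (Fin n) K) p.1 p.2) with hE
  have hEfin : E.Finite := by
    apply Set.Finite.biUnion S.finite_toSet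
    intro s _
    exact (Set.finite_range _).union (Set.finite_range _)
  set A : Subalgebra ℤ K := Algebra.adjoin ℤ E with hA
  haveI : Algebra.FiniteType ℤ A := by
    rw [← Subalgebra.fg_iff_finiteType]
    exact ⟨hEfin.toFinset, by rw [Set.Finite.coe_toFinset]⟩
  haveI : IsJacobsonRing A := isJacobsonRing_of_finiteType (A := ℤ)
  -- every element of G has all entries (and entries of its inverse) in A
  have key : ∀ g : G, (∀ i j, ((g : GL (Fin n) K) : Matrix (Fin n) (Fin n) K) i j ∈ A)
      ∧ (∀ i j, (((g⁻¹ : G) : GL (Fin n) K) : Matrix (Fin n) (Fin n) K) i j ∈ A) := by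
    intro g
    have hg : g ∈ Subgroup.closure (S : Set G) := hS ▸ Subgroup.mem_top g
    induction hg using Subgroup.closure_induction with
    | mem s hs =>
      constructor
      · intro i j
        exact Algebra.subset_adjoin (Set.mem_biUnion hs (Or.inl ⟨(i, j), rfl⟩))
      · intro i j
        exact Algebra.subset_adjoin (Set.mem_biUnion hs (Or.inr ⟨(i, j), rfl⟩))
    | one =>
      constructor <;> intro i j <;>
      · simp only [inv_one, OneMemClass.coe_one, Units.val_one, Matrix.one_apply]
        split
        · exact Subalgebra.one_mem A
        · exact Subalgebra.zero_mem A
    | mul x y hx hy ihx ihy =>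
      constructor
      · intro i j
        have : (((x * y : G) : GL (Fin n) K) : Matrix (Fin n) (Fin n) K)
            = ((x : GL (Fin n) K) : Matrix (Fin n) (Fin n) K)
              * ((y : GL (Fin n) K) : Matrix (Fin n) (Fin n) K) := by
          push_cast; rfl
        rw [this, Matrix.mul_apply]
        exact Subalgebra.sum_mem A fun k _ => Subalgebra.mul_mem A (ihx.1 i k) (ihy.1 k j)
      · intro i j
        have : ((((x * y)⁻¹ : G) : GL (Fin n) K) : Matrix (Fin n) (Fin n) K)
            = (((y⁻¹ : G) : GL (Fin n) K) : Matrix (Fin n) (Fin n) K)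
              * (((x⁻¹ : G) : GL (Fin n) K) : Matrix (Fin n) (Fin n) K) := by
          rw [mul_inv_rev]; push_cast; rfl
        rw [this, Matrix.mul_apply]
        exact Subalgebra.sum_mem A fun k _ => Subalgebra.mul_mem A (ihy.2 i k) (ihx.2 k j)
    | inv x hx ihx =>
      exact ⟨ihx.2, by simpa using ihx.1⟩
  -- realize each element of G as a matrix over A
  let toA : G → Matrix (Fin n) (Fin n) A := fun g i j =>
    ⟨((g : GL (Fin n) K) : Matrix (Fin n) (Fin n) K) i j, (key g).1 i j⟩
  let ι : A →+* K := (Subalgebra.val A).toRingHom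
  have hι : Function.Injective ι := Subtype.val_injective
  have hιm : Function.Injective (ι.mapMatrix (m := Fin n)) := fun M N h =>
    Matrix.ext fun i j => hι (congrFun (congrFun h i) j)
  have hmap : ∀ g : G, ι.mapMatrix (toA g) = ((g : GL (Fin n) K) : Matrix (Fin n) (Fin n) K) := by
    intro g; ext i j; rfl
  have htoA_one : toA 1 = 1 := by
    apply hιm
    rw [hmap, map_one]
    simp
  have htoA_mul : ∀ g h : G, toA (g * h) = toA g * toA h := by
    intro g h
    apply hιm
    rw [map_mul, hmap, hmap, hmap]
    push_cast; rfl
  have htoA_inv : ∀ g : G, toA g * toA g⁻¹ = 1 ∧ toA g⁻¹ * toA g = 1 := by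
    intro g
    constructor <;> rw [← htoA_mul] <;> simp [htoA_one]
  intro g hg
  -- find a nonzero entry of g - 1 in A
  have hexists : ∃ i j, toA g i j ≠ toA 1 i j := by
    by_contra h
    push_neg at h
    apply hg
    have h1 : toA g = toA 1 := Matrix.ext fun i j => h i j
    have hval : ((g : GL (Fin n) K) : Matrix (Fin n) (Fin n) K)
        = (((1 : G) : GL (Fin n) K) : Matrix (Fin n) (Fin n) K) := by
      rw [← hmap, ← hmap, h1]
    ext1
    exact Units.ext hval
  obtain ⟨i, j, hij⟩ := hexists
  set a : A := toA g i j - toA 1 i j with ha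
  have ha0 : a ≠ 0 := sub_ne_zero.mpr hij
  -- find a maximal ideal of A avoiding a
  have hbot : ((⊥ : Ideal A).jacobson : Ideal A) = ⊥ := by
    rw [← Ideal.radical_eq_jacobson]
    exact nilradical_eq_zero A
  have hmax : ∃ m : Ideal A, m.IsMaximal ∧ a ∉ m := by
    by_contra h
    push_neg at h
    have : a ∈ (⊥ : Ideal A).jacobson := Ideal.mem_sInf.mpr fun {J} hJ => h J hJ.2
    rw [hbot] at this
    exact ha0 this
  obtain ⟨m, hm, ham⟩ := hmax
  haveI := hm
  letI : Field (A ⧸ m) := Ideal.Quotient.field m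
  haveI : Algebra.FiniteType ℤ (A ⧸ m) :=
    Algebra.FiniteType.of_surjective
      (Ideal.Quotient.mkₐ ℤ m) (Ideal.Quotient.mkₐ_surjective ℤ m)
  haveI : Module.Finite ℤ (A ⧸ m) := finite_of_finite_type_of_isJacobsonRing ℤ (A ⧸ m)
  haveI hQfin : Finite (A ⧸ m) := finite_of_field_of_moduleFinite (A ⧸ m)
  -- construct the homomorphism to GL over the finite quotient
  let φ : A →+* A ⧸ m := Ideal.Quotient.mk m
  let ψ : Matrix (Fin n) (Fin n) A →+* Matrix (Fin n) (Fin n) (A ⧸ m) := φ.mapMatrix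
  let u : G → (Matrix (Fin n) (Fin n) (A ⧸ m))ˣ := fun g =>
    ⟨ψ (toA g), ψ (toA g⁻¹),
      by rw [← map_mul, (htoA_inv g).1, map_one],
      by rw [← map_mul, (htoA_inv g).2, map_one]⟩
  let f0 : G →* (Matrix (Fin n) (Fin n) (A ⧸ m))ˣ :=
    { toFun := u
      map_one' := by
        apply Units.ext
        show ψ (toA 1) = 1
        rw [htoA_one, map_one]
      map_mul' := by
        intro x y
        apply Units.ext
        show ψ (toA (x * y)) = ψ (toA x) * ψ (toA y)
        rw [htoA_mul, map_mul] }
  haveI : Finite (Matrix (Fin n) (Fin n) (A ⧸ m))ˣ := inferInstance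
  have hf0 : f0 g ≠ 1 := by
    intro h
    apply ham
    have hent : ψ (toA g) = 1 := congrArg Units.val h
    have h2 : φ (toA g i j) = φ (toA 1 i j) := by
      have h3 : φ (toA g i j) = (1 : Matrix (Fin n) (Fin n) (A ⧸ m)) i j :=
        congrFun (congrFun hent i) j
      rw [htoA_one] at *
      rw [h3]
      by_cases hij' : i = j <;> simp [Matrix.one_apply, hij']
    have h4 : φ a = 0 := by rw [ha, φ.map_sub, h2, sub_self]
    exact Ideal.Quotient.eq_zero_iff_mem.mp h4
  -- shrink to Type 0
  haveI := Fintype.ofFinite (Matrix (Fin n) (Fin n) (A ⧸ m))ˣ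
  set N := Fintype.card (Matrix (Fin n) (Fin n) (A ⧸ m))ˣ with hN
  let e : (Matrix (Fin n) (Fin n) (A ⧸ m))ˣ ≃ Fin N := Fintype.equivFin _
  let c : (Matrix (Fin n) (Fin n) (A ⧸ m))ˣ →* Equiv.Perm (Fin N) :=
    { toFun := fun x => (e.symm.trans (Equiv.mulLeft x)).trans e
      map_one' := by ext a; simp
      map_mul' := by
        intro x y
        ext a
        simp [Equiv.Perm.mul_apply, mul_assoc] }
  have hcinj : ∀ x, c x = 1 → x = 1 := by
    intro x hx
    have := congrArg (fun σ : Equiv.Perm (Fin N) => σ (e 1)) hx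
    simp only [c, Equiv.trans_apply, Equiv.symm_apply_apply, Equiv.coe_mulLeft,
      Equiv.Perm.coe_one, id_eq] at this
    have := e.injective this
    simpa using this
  refine ⟨Equiv.Perm (Fin N), inferInstance, inferInstance, c.comp f0, ?_⟩
  intro h
  exact hf0 (hcinj _ (by simpa using h))
end

section
/- Every finitely generated subgroup of GL_n(K), for K a field of characteristic zero, is virtually torsion-free, i.e., has a finite-index subgroup with no nontrivial elements of finite order. -/
/-- Core congruence-subgroup lemma: over a local ring, if `1 + x` is a `q`-th root of `1`
with `q` a unit and entries of `x` in the maximal ideal, then `x = 0`. -/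
theorem core_lemma {L : Type*} [CommRing L] [IsLocalRing L] {n : ℕ}
    (x : Matrix (Fin n) (Fin n) L) (hx : ∀ i j, x i j ∈ IsLocalRing.maximalIdeal L)
    (q : ℕ) (hq : IsUnit (q : L)) (h : (1 + x) ^ q = 1) : x = 0 := by
  classical
  set I : Ideal L := Ideal.span (Set.range fun p : Fin n × Fin n => x p.1 p.2) with hI
  have hxI : ∀ i j, x i j ∈ I := fun i j =>
    Ideal.subset_span ⟨(i, j), rfl⟩
  have hpow : ∀ k : ℕ, 1 ≤ k → ∀ i j, (x ^ k) i j ∈ I ^ k := by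
    intro k hk
    induction k with
    | zero => omega
    | succ m ih =>
      rcases Nat.eq_or_lt_of_le hk with h1 | h1
      · intro i j
        simp only [← h1, pow_one]
        exact hxI i j
      · have hm : 1 ≤ m := by omega
        intro i j
        rw [pow_succ x m, Matrix.mul_apply]
        exact Submodule.sum_mem _ fun c _ => Ideal.mul_mem_mul (ih hm i c) (hxI c j)
  -- expand (1+x)^q
  have hexp : ∑ i ∈ Finset.range (q + 1), x ^ i * (q.choose i : ℕ) • (1 : Matrix (Fin n) (Fin n) L) = 1 := by
    have hc := (Commute.one_right x).add_pow q
    simp only [one_pow, mul_one] at hc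
    simp only [nsmul_eq_mul, mul_one]
    rw [← hc, add_comm x 1, h]
  have hq1 : 1 ≤ q := by
    rcases Nat.eq_zero_or_pos q with h0 | h0
    · exfalso; rw [h0] at hq; simp only [Nat.cast_zero] at hq
      exact not_isUnit_zero hq
    · exact h0
  -- isolate the linear term
  have key : ∀ a b, (q : L) * x a b ∈ I ^ 2 := by
    intro a b
    have h0 : (∑ i ∈ Finset.range (q + 1), x ^ i * (q.choose i : ℕ) • (1 : Matrix (Fin n) (Fin n) L)) a b = (1 : Matrix (Fin n) (Fin n) L) a b := by rw [hexp]
    simp only [Matrix.sum_apply, mul_smul_comm, mul_one, Matrix.smul_apply] at h0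
    rw [Finset.range_eq_Ico, Finset.sum_eq_sum_Ico_succ_bot (by omega),
      Finset.sum_eq_sum_Ico_succ_bot (by omega : 1 < q + 1)] at h0
    simp only [pow_zero, pow_one, Nat.choose_zero_right, Nat.choose_one_right, one_smul] at h0
    have h2 : q • x a b + ∑ k ∈ Finset.Ico (1 + 1) (q + 1), q.choose k • (x ^ k) a b = 0 := by
      have h3 : (1 : Matrix (Fin n) (Fin n) L) a b +
          (q • x a b + ∑ k ∈ Finset.Ico (1 + 1) (q + 1), q.choose k • (x ^ k) a b) =
          (1 : Matrix (Fin n) (Fin n) L) a b + 0 := by rw [add_zero]; exact h0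
      exact add_left_cancel h3
    have h1 : (q : L) * x a b = - ∑ k ∈ Finset.Ico (1 + 1) (q + 1), q.choose k • (x ^ k) a b := by
      rw [← nsmul_eq_mul]
      exact eq_neg_of_add_eq_zero_left h2
    rw [h1]
    refine neg_mem (Submodule.sum_mem _ fun k hk => ?_)
    obtain ⟨hk2, hkq⟩ := Finset.mem_Ico.mp hk
    rw [nsmul_eq_mul]
    exact Ideal.mul_mem_left _ _ (Ideal.pow_le_pow_right (by omega) (hpow k (by omega) a b))
  -- Nakayama
  have hIm : I ≤ IsLocalRing.maximalIdeal L := by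
    rw [hI, Ideal.span_le]
    rintro y ⟨⟨a, b⟩, rfl⟩
    exact hx a b
  have hII : I ≤ I ^ 2 := by
    rw [hI, Ideal.span_le]
    rintro y ⟨⟨a, b⟩, rfl⟩
    obtain ⟨u, hu⟩ := hq
    have := key a b
    show x a b ∈ (I ^ 2 : Ideal L)
    have hxab : x a b = (↑u⁻¹ : L) * ((q : L) * x a b) := by
      rw [← mul_assoc, ← hu, Units.inv_mul, one_mul]
    rw [hxab]
    exact Ideal.mul_mem_left _ _ this
  have hbot : I = ⊥ := by
    refine Submodule.eq_bot_of_le_smul_of_le_jacobson_bot (IsLocalRing.maximalIdeal L) I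
      (Submodule.fg_span (Set.finite_range _)) ?_ ?_
    · calc I ≤ I ^ 2 := hII
        _ = I * I := sq I
        _ ≤ IsLocalRing.maximalIdeal L * I := Ideal.mul_mono_left hIm
        _ = IsLocalRing.maximalIdeal L • I := (Ideal.smul_eq_mul _ _).symm
    · rw [IsLocalRing.jacobson_eq_maximalIdeal ⊥ bot_ne_top]
  ext a b
  have : x a b ∈ (⊥ : Ideal L) := hbot ▸ hxI a b
  simpa using this


instance int_isJacobson : IsJacobsonRing ℤ := by
  rw [isJacobsonRing_iff_prime_eq]
  intro P hP
  rcases eq_or_ne P ⊥ with rfl | hb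
  · refine le_antisymm ?_ Ideal.le_jacobson
    intro x hx
    rw [Ideal.mem_jacobson_bot] at hx
    have h1 := hx x
    rw [Int.isUnit_iff] at h1
    have : x = 0 := by rcases h1 with h1 | h1 <;> nlinarith
    simp [this]
  · haveI := hP
    haveI := _root_.IsPrime.to_maximal_ideal (hpi := hP) hb
    exact Ideal.jacobson_eq_self_of_isMaximal

theorem residue_finite {R : Type*} [CommRing R] [Algebra.FiniteType ℤ R]
    (m : Ideal R) [m.IsMaximal] : Finite (R ⧸ m) := by
  letI : Field (R ⧸ m) := Ideal.Quotient.field m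
  have hft : Algebra.FiniteType ℤ (R ⧸ m) :=
    Algebra.FiniteType.of_surjective (Ideal.Quotient.mkₐ ℤ m)
      Ideal.Quotient.mk_surjective
  have hfin : Module.Finite ℤ (R ⧸ m) := finite_of_finite_type_of_isJacobsonRing ℤ (R ⧸ m)
  obtain ⟨p, hp⟩ := CharP.exists (R ⧸ m)
  rcases eq_or_ne p 0 with rfl | hp0
  · exfalso
    haveI : CharZero (R ⧸ m) := CharP.charP_to_charZero _
    have hint : Algebra.IsIntegral ℤ (R ⧸ m) := Algebra.IsIntegral.of_finite ℤ _
    have h2 : IsIntegral ℤ ((algebraMap ℚ (R ⧸ m)) (1 / 2)) := hint.isIntegral _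
    rw [isIntegral_algebraMap_iff (algebraMap ℚ (R ⧸ m)).injective] at h2
    obtain ⟨y, hy⟩ := IsIntegrallyClosed.isIntegral_iff.mp h2
    have : (2 : ℚ) * (y : ℚ) = 1 := by
      rw [show ((y : ℚ)) = algebraMap ℤ ℚ y from rfl, hy]; norm_num
    have : (2 * y : ℤ) = 1 := by exact_mod_cast this
    omega
  · have htors : Module.IsTorsion ℤ (R ⧸ m) := by
      intro x
      refine ⟨⟨(p : ℤ), ?_⟩, ?_⟩
      · simp [mem_nonZeroDivisors_iff_ne_zero]
        exact_mod_cast hp0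
      · show (p : ℤ) • x = 0
        simp [zsmul_eq_mul, CharP.cast_eq_zero (R ⧸ m) p]
    exact Module.finite_of_fg_torsion _ htors



/-- Congruence kernel torsion-freeness for torsion prime to the residue characteristic. -/
theorem cong_torsionfree {R₀ : Type*} [CommRing R₀] [IsDomain R₀] (m : Ideal R₀) [m.IsMaximal]
    {n q : ℕ} (hq : (q : R₀) ∉ m) (g : (Matrix (Fin n) (Fin n) R₀)ˣ)
    (hg : ((Ideal.Quotient.mk m).mapMatrix (g : Matrix (Fin n) (Fin n) R₀)) = 1)
    (hgq : g ^ q = 1) : g = 1 := by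
  classical
  set L := Localization.AtPrime m with hL
  set φ : R₀ →+* L := algebraMap R₀ L with hφ
  have hinj : Function.Injective φ := IsLocalization.injective L m.primeCompl_le_nonZeroDivisors
  set x : Matrix (Fin n) (Fin n) L := φ.mapMatrix ((g : Matrix (Fin n) (Fin n) R₀) - 1) with hx
  have hone : (1 : Matrix (Fin n) (Fin n) L) + x = φ.mapMatrix (g : Matrix (Fin n) (Fin n) R₀) := by
    rw [hx, map_sub, map_one, add_sub_cancel]
  have hmem : ∀ i j, x i j ∈ IsLocalRing.maximalIdeal L := by
    intro i j
    have h1 : ((g : Matrix (Fin n) (Fin n) R₀) - 1) i j ∈ m := by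
      rw [← Ideal.Quotient.eq_zero_iff_mem]
      have := congrArg (fun M => M i j) hg
      simp only [RingHom.mapMatrix_apply, Matrix.map_apply] at this
      have h2 : Ideal.Quotient.mk m (((g : Matrix (Fin n) (Fin n) R₀) - 1) i j)
          = ((Ideal.Quotient.mk m).mapMatrix ((g : Matrix (Fin n) (Fin n) R₀) - 1)) i j := rfl
      rw [h2, map_sub, map_one, hg, sub_self]
      simp
    rw [← Localization.AtPrime.map_eq_maximalIdeal]
    exact Ideal.mem_map_of_mem _ h1
  have hunit : IsUnit ((q : ℕ) : L) := by
    have : ((q : ℕ) : L) = φ ((q : ℕ) : R₀) := by rw [map_natCast]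
    rw [this]
    exact IsLocalization.map_units L (⟨(q : R₀), hq⟩ : m.primeCompl)
  have hpow : ((1 : Matrix (Fin n) (Fin n) L) + x) ^ q = 1 := by
    rw [hone, ← map_pow]
    have : ((g : Matrix (Fin n) (Fin n) R₀)) ^ q = 1 := by
      rw [← Units.val_pow_eq_pow_val, hgq, Units.val_one]
    rw [this, map_one]
  have hx0 := core_lemma x hmem q hunit hpow
  have hsub : (g : Matrix (Fin n) (Fin n) R₀) - 1 = 0 := by
    ext i j
    have := congrArg (fun M => M i j) hx0
    simp only [RingHom.mapMatrix_apply, Matrix.map_apply, Matrix.zero_apply] at this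
    rw [hx] at this
    have h0 : φ (((g : Matrix (Fin n) (Fin n) R₀) - 1) i j) = φ 0 := by
      simpa using this
    simpa using hinj h0
  ext i j
  have := congrArg (fun M => M i j) hsub
  simp only [Matrix.sub_apply, Matrix.zero_apply, sub_eq_zero] at this
  simpa using this




set_option maxHeartbeats 1000000 in
/-- Selberg's lemma: every finitely generated subgroup of `GL n K`, for `K` a field of
characteristic zero, is virtually torsion-free. -/
theorem selberg_virtually_torsion_free (n : ℕ) (K : Type*) [Field K] [CharZero K]
    (G : Subgroup (GL (Fin n) K)) (hfg : Group.FG G) :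
    ∃ H : Subgroup G, H.FiniteIndex ∧ ∀ h : H, IsOfFinOrder h → h = 1 := by
  classical
  obtain ⟨S, hS⟩ := (Group.fg_iff_subgroup_fg G).mp hfg
  -- the set of entries of the generators and their inverses
  set T : Set K := ⋃ g ∈ (S : Set (GL (Fin n) K)),
      ((Set.range fun p : Fin n × Fin n => (g : Matrix (Fin n) (Fin n) K) p.1 p.2) ∪
       (Set.range fun p : Fin n × Fin n => ((g⁻¹ : GL (Fin n) K) : Matrix (Fin n) (Fin n) K) p.1 p.2)) with hT
  have hTfin : T.Finite := by
    refine Set.Finite.biUnion (Finset.finite_toSet S) fun g _ => ?_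
    exact (Set.finite_range _).union (Set.finite_range _)
  set A : Subalgebra ℤ K := Algebra.adjoin ℤ T with hA
  haveI hAft : Algebra.FiniteType ℤ ↥A := by
    rw [← Subalgebra.fg_iff_finiteType]
    exact Subalgebra.fg_def.mpr ⟨T, hTfin, rfl⟩
  haveI : CharZero ↥A := inferInstance
  haveI : IsDomain ↥A := inferInstance
  haveI : IsJacobsonRing ↥A := isJacobsonRing_of_finiteType (A := ℤ)
  -- the embedding GL_n(A) → GL_n(K)
  set ι : ↥A →+* K := A.val.toRingHom with hι
  have hιinj : Function.Injective ι := Subtype.val_injective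
  set Φ0 : (Matrix (Fin n) (Fin n) ↥A)ˣ →* (Matrix (Fin n) (Fin n) K)ˣ :=
    Units.map (RingHom.mapMatrix ι).toMonoidHom with hΦ0
  have hmapinj : Function.Injective (RingHom.mapMatrix ι : Matrix (Fin n) (Fin n) ↥A →+* Matrix (Fin n) (Fin n) K) := by
    intro M N h
    ext i j
    exact congrArg (fun P : Matrix (Fin n) (Fin n) K => P i j) h
  have hΦ0inj : Function.Injective Φ0 := by
    intro u v h
    exact Units.ext (hmapinj (congrArg Units.val h))
  -- G is contained in the range of Φ0
  have hGU : G ≤ Φ0.range := by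
    rw [← hS, Subgroup.closure_le]
    intro g hg
    have hmem : ∀ i j, (g : Matrix (Fin n) (Fin n) K) i j ∈ A ∧
        ((g⁻¹ : GL (Fin n) K) : Matrix (Fin n) (Fin n) K) i j ∈ A := by
      intro i j
      constructor
      · exact Algebra.subset_adjoin (Set.mem_biUnion hg (Or.inl ⟨(i, j), rfl⟩))
      · exact Algebra.subset_adjoin (Set.mem_biUnion hg (Or.inr ⟨(i, j), rfl⟩))
    set gA : Matrix (Fin n) (Fin n) ↥A := fun i j => ⟨(g : Matrix (Fin n) (Fin n) K) i j, (hmem i j).1⟩ with hgA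
    set gB : Matrix (Fin n) (Fin n) ↥A := fun i j =>
      ⟨((g⁻¹ : GL (Fin n) K) : Matrix (Fin n) (Fin n) K) i j, (hmem i j).2⟩ with hgB
    have hval : RingHom.mapMatrix ι gA = (g : Matrix (Fin n) (Fin n) K) := by
      ext i j; rfl
    have hvalB : RingHom.mapMatrix ι gB = ((g⁻¹ : GL (Fin n) K) : Matrix (Fin n) (Fin n) K) := by
      ext i j; rfl
    have h1 : gA * gB = 1 := by
      apply hmapinj
      rw [map_mul, map_one, hval, hvalB, ← Units.val_mul, mul_inv_cancel, Units.val_one]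
    have h2 : gB * gA = 1 := by
      apply hmapinj
      rw [map_mul, map_one, hval, hvalB, ← Units.val_mul, inv_mul_cancel, Units.val_one]
    exact ⟨⟨gA, gB, h1, h2⟩, Units.ext hval⟩
  -- the section G → GL_n(A)
  set e := MonoidHom.ofInjective hΦ0inj with he
  set ψ : ↥G →* (Matrix (Fin n) (Fin n) ↥A)ˣ :=
    e.symm.toMonoidHom.comp (Subgroup.inclusion hGU) with hψdef
  have hψ : ∀ g : ↥G, Φ0 (ψ g) = (g : GL (Fin n) K) := by
    intro g
    have h1 : e (e.symm (Subgroup.inclusion hGU g)) = Subgroup.inclusion hGU g :=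
      e.apply_symm_apply _
    have h2 := congrArg Subtype.val h1
    rw [he] at h2
    rw [MonoidHom.ofInjective_apply] at h2
    exact h2
  -- two maximal ideals with distinct residue characteristics
  obtain ⟨m₁, hm₁⟩ := Ideal.exists_maximal ↥A
  haveI := hm₁
  haveI : Finite (↥A ⧸ m₁) := residue_finite m₁
  letI : Field (↥A ⧸ m₁) := Ideal.Quotient.field m₁
  set p₁ := ringChar (↥A ⧸ m₁) with hp₁def
  have hp₁ : p₁.Prime := CharP.char_is_prime (↥A ⧸ m₁) p₁
  have hexists : ∃ m : Ideal ↥A, m.IsMaximal ∧ ((p₁ : ↥A) ∉ m) := by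
    by_contra hcon
    push_neg at hcon
    have hmem : ((p₁ : ℕ) : ↥A) ∈ (⊥ : Ideal ↥A).jacobson := by
      rw [Ideal.jacobson]
      exact Submodule.mem_sInf.mpr fun J hJ => hcon J hJ.2
    have hjac : (⊥ : Ideal ↥A).jacobson = ⊥ := by
      rw [← Ideal.radical_eq_jacobson]
      exact nilradical_eq_zero ↥A
    rw [hjac, Ideal.mem_bot] at hmem
    exact (Nat.cast_ne_zero.mpr hp₁.ne_zero) hmem
  obtain ⟨m₂, hm₂, hp₁m₂⟩ := hexists
  haveI := hm₂
  haveI : Finite (↥A ⧸ m₂) := residue_finite m₂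
  letI : Field (↥A ⧸ m₂) := Ideal.Quotient.field m₂
  set p₂ := ringChar (↥A ⧸ m₂) with hp₂def
  have hp₂ : p₂.Prime := CharP.char_is_prime (↥A ⧸ m₂) p₂
  have hp₁₂ : p₂ ≠ p₁ := by
    intro heq
    apply hp₁m₂
    have h0 : ((p₁ : ℕ) : ↥A ⧸ m₂) = 0 := by
      rw [← heq]; exact CharP.cast_eq_zero (↥A ⧸ m₂) p₂
    rw [← Ideal.Quotient.eq_zero_iff_mem, map_natCast]
    exact h0
  -- the congruence homomorphism
  set π₁ : (Matrix (Fin n) (Fin n) ↥A)ˣ →* (Matrix (Fin n) (Fin n) (↥A ⧸ m₁))ˣ :=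
    Units.map (RingHom.mapMatrix (Ideal.Quotient.mk m₁)).toMonoidHom with hπ₁
  set π₂ : (Matrix (Fin n) (Fin n) ↥A)ˣ →* (Matrix (Fin n) (Fin n) (↥A ⧸ m₂))ˣ :=
    Units.map (RingHom.mapMatrix (Ideal.Quotient.mk m₂)).toMonoidHom with hπ₂
  set Φ := ((π₁.comp ψ).prod (π₂.comp ψ)) with hΦ
  refine ⟨Φ.ker, ?_, ?_⟩
  · infer_instance
  · intro h hord
    by_contra hne
    set u := ψ ((h : ↥G)) with hu
    have hfo : IsOfFinOrder u := ψ.isOfFinOrder ((Φ.ker.subtype).isOfFinOrder hord)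
    have hu1 : u ≠ 1 := by
      intro h0
      apply hne
      have h1 : ((h : ↥G) : GL (Fin n) K) = 1 := by
        rw [← hψ ((h : ↥G)), ← hu, h0, map_one]
      exact Subtype.ext (Subtype.ext h1)
    set d := orderOf u with hd
    have hd1 : d ≠ 1 := fun hh => hu1 (orderOf_eq_one_iff.mp hh)
    have hd0 : d ≠ 0 := hfo.orderOf_pos.ne'
    set q := d.minFac with hqdef
    have hqp : q.Prime := Nat.minFac_prime hd1
    have hqd : q ∣ d := Nat.minFac_dvd d
    set g := u ^ (d / q) with hg
    have hgq : g ^ q = 1 := by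
      rw [hg, ← pow_mul, Nat.div_mul_cancel hqd, hd, pow_orderOf_eq_one]
    have hgne : g ≠ 1 := by
      intro h0
      have horder : orderOf g = q := orderOf_pow_orderOf_div hd0 hqd
      rw [h0, orderOf_one] at horder
      exact hqp.ne_one horder.symm
    -- congruence conditions
    have hker : Φ (h : ↥G) = 1 := MonoidHom.mem_ker.mp h.2
    have hk₁ : π₁ u = 1 := congrArg Prod.fst hker
    have hk₂ : π₂ u = 1 := congrArg Prod.snd hker
    have hg₁ : (Ideal.Quotient.mk m₁).mapMatrix (g : Matrix (Fin n) (Fin n) ↥A) = 1 := by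
      have h1 : π₁ g = 1 := by rw [hg, map_pow, hk₁, one_pow]
      exact congrArg Units.val h1
    have hg₂ : (Ideal.Quotient.mk m₂).mapMatrix (g : Matrix (Fin n) (Fin n) ↥A) = 1 := by
      have h1 : π₂ g = 1 := by rw [hg, map_pow, hk₂, one_pow]
      exact congrArg Units.val h1
    have hnotboth : q ≠ p₁ ∨ q ≠ p₂ := by
      rcases eq_or_ne q p₁ with heq | hne1
      · exact Or.inr (fun hh => hp₁₂ (by rw [← hh, ← heq]))
      · exact Or.inl hne1
    rcases hnotboth with hqne | hqne
    · have hqm : ((q : ℕ) : ↥A) ∉ m₁ := by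
        intro hmm
        have h0 : ((q : ℕ) : ↥A ⧸ m₁) = 0 := by
          rw [← map_natCast (Ideal.Quotient.mk m₁), Ideal.Quotient.eq_zero_iff_mem]
          exact hmm
        have := (CharP.cast_eq_zero_iff (↥A ⧸ m₁) p₁ q).mp h0
        exact hqne ((Nat.prime_dvd_prime_iff_eq hp₁ hqp).mp this).symm
      exact hgne (cong_torsionfree m₁ hqm g hg₁ hgq)
    · have hqm : ((q : ℕ) : ↥A) ∉ m₂ := by
        intro hmm
        have h0 : ((q : ℕ) : ↥A ⧸ m₂) = 0 := by
          rw [← map_natCast (Ideal.Quotient.mk m₂), Ideal.Quotient.eq_zero_iff_mem]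
          exact hmm
        have := (CharP.cast_eq_zero_iff (↥A ⧸ m₂) p₂ q).mp h0
        exact hqne ((Nat.prime_dvd_prime_iff_eq hp₂ hqp).mp this).symm
      exact hgne (cong_torsionfree m₂ hqm g hg₂ hgq)
end

section
/- If a group G has finite-index subgroups H_p and H_q that are residually p-finite and residually q-finite respectively, for distinct primes p and q, then G has a finite-index torsion-free subgroup. -/
/-- In a residually `p`-finite group, there is no element of prime order `r ≠ p`. -/
lemma no_elem_of_prime_order_ne_p {H : Type*} [Group H] (p : ℕ) (hp : p.Prime)
    (hres : ∀ h : H, h ≠ 1 →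
      ∃ (Q : Type) (_ : Group Q), Finite Q ∧ IsPGroup p Q ∧ ∃ f : H →* Q, f h ≠ 1)
    (h : H) (r : ℕ) (hr : r.Prime) (hrp : r ≠ p) (hord : orderOf h = r) : False := by
  have hne : h ≠ 1 := by
    intro h1
    rw [h1, orderOf_one] at hord
    exact hr.one_lt.ne hord
  obtain ⟨Q, _, _, hpQ, f, hf⟩ := hres h hne
  have hdvd : orderOf (f h) ∣ r := hord ▸ orderOf_map_dvd f h
  have : orderOf (f h) = r := ((Nat.dvd_prime hr).mp hdvd).resolve_left
    (fun h1 => hf (orderOf_eq_one_iff.mp h1))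
  obtain ⟨k, hk⟩ := hpQ (f h)
  have hrd : r ∣ p ^ k := this ▸ orderOf_dvd_of_pow_eq_one hk
  exact hrp ((Nat.prime_dvd_prime_iff_eq hr hp).mp (hr.dvd_of_dvd_pow hrd))

/-- If a group `G` has finite-index subgroups `Hp` and `Hq` that are residually `p`-finite
and residually `q`-finite respectively, for distinct primes `p` and `q`, then `G` has a
finite-index torsion-free subgroup. -/
theorem virtually_torsion_free_of_virtually_residually_p_and_q
    {G : Type*} [Group G] (p q : ℕ) (hp : p.Prime) (hq : q.Prime) (hpq : p ≠ q)
    (Hp Hq : Subgroup G) (hHp : Hp.FiniteIndex) (hHq : Hq.FiniteIndex)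
    (hresp : ∀ h : Hp, h ≠ 1 →
      ∃ (Q : Type) (_ : Group Q), Finite Q ∧ IsPGroup p Q ∧ ∃ f : Hp →* Q, f h ≠ 1)
    (hresq : ∀ h : Hq, h ≠ 1 →
      ∃ (Q : Type) (_ : Group Q), Finite Q ∧ IsPGroup q Q ∧ ∃ f : Hq →* Q, f h ≠ 1) :
    ∃ K : Subgroup G, K.FiniteIndex ∧ ∀ k : K, IsOfFinOrder k → k = 1 := by
  haveI := hHp
  haveI := hHq
  refine ⟨Hp ⊓ Hq, inferInstance, ?_⟩
  intro k hk
  by_contra hk1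
  set n := orderOf k with hn
  have hn1 : n ≠ 1 := fun h1 => hk1 (orderOf_eq_one_iff.mp h1)
  obtain ⟨r, hr, hrdvd⟩ := Nat.exists_prime_and_dvd hn1
  -- the element g = k ^ (n / r) has order r
  set g : ↥(Hp ⊓ Hq) := k ^ (n / r) with hg
  have hnpos : 0 < n := hk.orderOf_pos
  have hrn : n / r ∣ n := Nat.div_dvd_of_dvd hrdvd
  have hordg : orderOf g = r := by
    have hd0 : n / r ≠ 0 := Nat.div_ne_zero_iff_of_dvd hrdvd |>.mpr ⟨hnpos.ne', hr.pos.ne'⟩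
    rw [hg, orderOf_pow' _ hd0, ← hn, Nat.gcd_eq_right hrn,
      Nat.div_div_self hrdvd hnpos.ne']
  -- order of g as element of G
  have hordG : orderOf (g : G) = r := by
    rw [Subgroup.orderOf_coe, hordg]
  have hmem := g.2
  rcases (Subgroup.mem_inf).mp hmem with ⟨hgp, hgq⟩
  rcases eq_or_ne r p with hrp | hrp
  · -- r = p, so r ≠ q; use Hq
    have hrq : r ≠ q := hrp ▸ hpq
    refine no_elem_of_prime_order_ne_p q hq hresq ⟨(g : G), hgq⟩ r hr hrq ?_
    rw [Subgroup.orderOf_mk, hordG]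
  · refine no_elem_of_prime_order_ne_p p hp hresp ⟨(g : G), hgp⟩ r hr hrp ?_
    rw [Subgroup.orderOf_mk, hordG]
end

section
/- For any euclidean domain A, SL_n(A) is generated by the elementary matrices 1 + a·e_{ij} with a ∈ A and i ≠ j. -/
open Matrix

namespace SLnGen

variable {n : ℕ} {A : Type*} [EuclideanDomain A]

abbrev G (n : ℕ) (A : Type*) [EuclideanDomain A] :
    Subgroup (Matrix.SpecialLinearGroup (Fin n) A) :=
  Subgroup.closure
    {M : Matrix.SpecialLinearGroup (Fin n) A |
      ∃ (a : A) (i j : Fin n), i ≠ j ∧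
        (M : Matrix (Fin n) (Fin n) A) = 1 + Matrix.single i j a}

def Elem (i j : Fin n) (h : i ≠ j) (a : A) : Matrix.SpecialLinearGroup (Fin n) A :=
  ⟨Matrix.transvection i j a, Matrix.det_transvection_of_ne i j h a⟩

@[simp] lemma elem_coe (i j : Fin n) (h : i ≠ j) (a : A) :
    (Elem i j h a : Matrix (Fin n) (Fin n) A) = Matrix.transvection i j a := rfl

lemma elem_mem (i j : Fin n) (h : i ≠ j) (a : A) : Elem i j h a ∈ G n A :=
  Subgroup.subset_closure ⟨a, i, j, h, rfl⟩

lemma elem_mul_neg (i j : Fin n) (h : i ≠ j) (a : A) :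
    Elem i j h a * Elem i j h (-a) = 1 := by
  apply Subtype.ext
  rw [Matrix.SpecialLinearGroup.coe_mul, Matrix.SpecialLinearGroup.coe_one, elem_coe, elem_coe, transvection_mul_transvection_same _ _ h, add_neg_cancel,
    transvection_zero]

lemma of_left_mul {i j : Fin n} (h : i ≠ j) (a : A)
    {M : Matrix.SpecialLinearGroup (Fin n) A}
    (hm : Elem i j h a * M ∈ G n A) : M ∈ G n A := by
  have : M = Elem i j h (-a) * (Elem i j h a * M) := by
    rw [← mul_assoc]
    have := elem_mul_neg i j h (-a)
    rw [neg_neg] at this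
    rw [this, one_mul]
  rw [this]
  exact mul_mem (elem_mem _ _ _ _) hm

lemma of_right_mul {i j : Fin n} (h : i ≠ j) (a : A)
    {M : Matrix.SpecialLinearGroup (Fin n) A}
    (hm : M * Elem i j h a ∈ G n A) : M ∈ G n A := by
  have : M = M * Elem i j h a * Elem i j h (-a) := by
    rw [mul_assoc, elem_mul_neg, mul_one]
  rw [this]
  exact mul_mem hm (elem_mem _ _ _ _)

/-- `Rel2 p q M N`: `N` is obtained from `M` by row operations involving only rows `p, q`. -/
def Rel2 (p q : Fin n) (M N : Matrix.SpecialLinearGroup (Fin n) A) : Prop :=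
  (N ∈ G n A → M ∈ G n A) ∧
  (∀ r, r ≠ p → r ≠ q → ∀ c, (N : Matrix (Fin n) (Fin n) A) r c = (M : Matrix (Fin n) (Fin n) A) r c) ∧
  (∀ c, (M : Matrix (Fin n) (Fin n) A) p c = 0 → (M : Matrix (Fin n) (Fin n) A) q c = 0 →
    (N : Matrix (Fin n) (Fin n) A) p c = 0 ∧ (N : Matrix (Fin n) (Fin n) A) q c = 0)

lemma Rel2.refl (p q : Fin n) (M : Matrix.SpecialLinearGroup (Fin n) A) : Rel2 p q M M :=
  ⟨id, fun _ _ _ _ => rfl, fun _ h1 h2 => ⟨h1, h2⟩⟩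

lemma Rel2.trans {p q : Fin n} {M N P : Matrix.SpecialLinearGroup (Fin n) A}
    (h1 : Rel2 p q M N) (h2 : Rel2 p q N P) : Rel2 p q M P :=
  ⟨fun h => h1.1 (h2.1 h), fun r hr1 hr2 c => (h2.2.1 r hr1 hr2 c).trans (h1.2.1 r hr1 hr2 c),
   fun c hp hq => h2.2.2 c (h1.2.2 c hp hq).1 (h1.2.2 c hp hq).2⟩

lemma rel2_left {p q : Fin n} (h : p ≠ q) (a : A) (M : Matrix.SpecialLinearGroup (Fin n) A) :
    Rel2 p q M (Elem p q h a * M) := by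
  refine ⟨of_left_mul h a, ?_, ?_⟩
  · intro r hr1 _ c
    rw [Matrix.SpecialLinearGroup.coe_mul, elem_coe, transvection_mul_apply_of_ne _ _ _ _ hr1]
  · intro c h1 h2
    constructor
    · rw [Matrix.SpecialLinearGroup.coe_mul, elem_coe, transvection_mul_apply_same, h1, h2,
        mul_zero, add_zero]
    · rw [Matrix.SpecialLinearGroup.coe_mul, elem_coe,
        transvection_mul_apply_of_ne _ _ _ _ (Ne.symm h), h2]

lemma rel2_left' {p q : Fin n} (h : p ≠ q) (a : A) (M : Matrix.SpecialLinearGroup (Fin n) A) :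
    Rel2 p q M (Elem q p (Ne.symm h) a * M) := by
  refine ⟨of_left_mul (Ne.symm h) a, ?_, ?_⟩
  · intro r _ hr2 c
    rw [Matrix.SpecialLinearGroup.coe_mul, elem_coe, transvection_mul_apply_of_ne _ _ _ _ hr2]
  · intro c h1 h2
    constructor
    · rw [Matrix.SpecialLinearGroup.coe_mul, elem_coe, transvection_mul_apply_of_ne _ _ _ _ h, h1]
    · rw [Matrix.SpecialLinearGroup.coe_mul, elem_coe, transvection_mul_apply_same, h1, h2,
        mul_zero, add_zero]

/-- Euclidean algorithm on the pair of entries `(p,p)` and `(q,p)`. -/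
lemma clearPair {p q : Fin n} (hqp : q ≠ p) (a b : A) :
    ∀ (M : Matrix.SpecialLinearGroup (Fin n) A) (s t : Aˣ),
      (M : Matrix (Fin n) (Fin n) A) p p = t * b →
      (M : Matrix (Fin n) (Fin n) A) q p = s * a →
      ∃ N, Rel2 p q M N ∧ (N : Matrix (Fin n) (Fin n) A) q p = 0 := by
  induction a, b using EuclideanDomain.GCD.induction with
  | H0 x =>
    intro M s t hp hq
    exact ⟨M, Rel2.refl p q M, by rw [hq, mul_zero]⟩
  | H1 a b ha IH =>
    intro M s t hp hq
    have hpq : p ≠ q := Ne.symm hqp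
    -- Step 1: row p ← row p - t s⁻¹ (b/a) · row q, making entry (p,p) equal to t * (b % a)
    set c1 : A := -(↑t * ↑s⁻¹ * (b / a)) with hc1
    set M1 := Elem p q hpq c1 * M with hM1
    have h1p : (M1 : Matrix (Fin n) (Fin n) A) p p = t * (b % a) := by
      rw [hM1, Matrix.SpecialLinearGroup.coe_mul, elem_coe, transvection_mul_apply_same,
        hp, hq, EuclideanDomain.mod_eq_sub_mul_div]
      have hs : (↑s⁻¹ * ↑s : A) = 1 := Units.inv_mul s
      ring_nf
      linear_combination (-(↑t * (b / a) * a)) * hs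
    have h1q : (M1 : Matrix (Fin n) (Fin n) A) q p = s * a := by
      rw [hM1, Matrix.SpecialLinearGroup.coe_mul, elem_coe,
        transvection_mul_apply_of_ne _ _ _ _ hqp, hq]
    -- Steps 2-4: negate-swap rows p and q
    set M2 := Elem p q hpq 1 * M1 with hM2
    have h2p : (M2 : Matrix (Fin n) (Fin n) A) p p = t * (b % a) + s * a := by
      rw [hM2, Matrix.SpecialLinearGroup.coe_mul, elem_coe, transvection_mul_apply_same,
        h1p, h1q, one_mul]
    have h2q : (M2 : Matrix (Fin n) (Fin n) A) q p = s * a := by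
      rw [hM2, Matrix.SpecialLinearGroup.coe_mul, elem_coe,
        transvection_mul_apply_of_ne _ _ _ _ hqp, h1q]
    set M3 := Elem q p hqp (-1) * M2 with hM3
    have h3p : (M3 : Matrix (Fin n) (Fin n) A) p p = t * (b % a) + s * a := by
      rw [hM3, Matrix.SpecialLinearGroup.coe_mul, elem_coe,
        transvection_mul_apply_of_ne _ _ _ _ hpq, h2p]
    have h3q : (M3 : Matrix (Fin n) (Fin n) A) q p = -(t * (b % a)) := by
      rw [hM3, Matrix.SpecialLinearGroup.coe_mul, elem_coe, transvection_mul_apply_same,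
        h2p, h2q]
      ring
    set M4 := Elem p q hpq 1 * M3 with hM4
    have h4p : (M4 : Matrix (Fin n) (Fin n) A) p p = s * a := by
      rw [hM4, Matrix.SpecialLinearGroup.coe_mul, elem_coe, transvection_mul_apply_same,
        h3p, h3q]
      ring
    have h4q : (M4 : Matrix (Fin n) (Fin n) A) q p = (-t : Aˣ) * (b % a) := by
      rw [hM4, Matrix.SpecialLinearGroup.coe_mul, elem_coe,
        transvection_mul_apply_of_ne _ _ _ _ hqp, h3q, Units.val_neg]
      ring
    obtain ⟨N, hrel, hN⟩ := IH M4 (-t) s h4p h4q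
    refine ⟨N, ?_, hN⟩
    exact ((((rel2_left hpq c1 M).trans (rel2_left hpq 1 M1)).trans
      (rel2_left' hpq (-1) M2)).trans (rel2_left hpq 1 M3)).trans hrel

/-- Invariant: `M` agrees with the identity on the first `k` rows and columns. -/
def Inv (k : ℕ) (M : Matrix.SpecialLinearGroup (Fin n) A) : Prop :=
  ∀ i j : Fin n, (i.1 < k ∨ j.1 < k) →
    (M : Matrix (Fin n) (Fin n) A) i j = (1 : Matrix (Fin n) (Fin n) A) i j

lemma clearCol (k : ℕ) (κ : Fin n) (hκ : κ.1 = k) (s : Finset (Fin n))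
    (hs : ∀ i ∈ s, κ < i) :
    ∀ M : Matrix.SpecialLinearGroup (Fin n) A, Inv k M →
      (∀ i, i ≠ κ → i ∉ s → (M : Matrix (Fin n) (Fin n) A) i κ = 0) →
      ∃ N, (N ∈ G n A → M ∈ G n A) ∧ Inv k N ∧
        (∀ i, i ≠ κ → (N : Matrix (Fin n) (Fin n) A) i κ = 0) := by
  induction s using Finset.induction with
  | empty =>
    intro M hInv h0
    exact ⟨M, id, hInv, fun i hi => h0 i hi (Finset.notMem_empty i)⟩
  | @insert i s hi IH =>
    intro M hInv h0
    have hiκ : i ≠ κ := ne_of_gt (hs i (Finset.mem_insert_self i s))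
    have hik : k < i.1 := by
      have := hs i (Finset.mem_insert_self i s)
      rw [Fin.lt_def, hκ] at this
      exact this
    obtain ⟨N1, hrel, hN1⟩ := clearPair hiκ ((M : Matrix (Fin n) (Fin n) A) i κ)
      ((M : Matrix (Fin n) (Fin n) A) κ κ) M 1 1 (by simp) (by simp)
    have hInv1 : Inv k N1 := by
      intro r c hrc
      rcases hrc with hr | hc
      · rw [hrel.2.1 r (by rintro rfl; omega) (by rintro rfl; omega) c]
        exact hInv r c (Or.inl hr)
      · have hκc : (M : Matrix (Fin n) (Fin n) A) κ c = 0 := by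
          rw [hInv κ c (Or.inr hc)]
          exact Matrix.one_apply_ne (by rintro rfl; omega)
        have hic : (M : Matrix (Fin n) (Fin n) A) i c = 0 := by
          rw [hInv i c (Or.inr hc)]
          exact Matrix.one_apply_ne (by rintro rfl; omega)
        rcases eq_or_ne r κ with rfl | hrκ
        · rw [(hrel.2.2 c hκc hic).1]
          exact (Matrix.one_apply_ne (by rintro rfl; omega)).symm
        rcases eq_or_ne r i with rfl | hri
        · rw [(hrel.2.2 c hκc hic).2]
          exact (Matrix.one_apply_ne (by rintro rfl; omega)).symm
        · rw [hrel.2.1 r hrκ hri c]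
          exact hInv r c (Or.inr hc)
    obtain ⟨N, hG, hInvN, hcol⟩ := IH (fun j hj => hs j (Finset.mem_insert_of_mem hj)) N1 hInv1
      (by
        intro j hjκ hjs
        rcases eq_or_ne j i with rfl | hji
        · exact hN1
        · rw [hrel.2.1 j hjκ hji κ]
          exact h0 j hjκ (by simp [hji, hjs]))
    exact ⟨N, fun h => hrel.1 (hG h), hInvN, hcol⟩

lemma clearRow (k : ℕ) (κ : Fin n) (hκ : κ.1 = k) (s : Finset (Fin n))
    (hs : ∀ j ∈ s, κ < j) :
    ∀ M : Matrix.SpecialLinearGroup (Fin n) A, Inv k M →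
      (M : Matrix (Fin n) (Fin n) A) κ κ = 1 →
      (∀ r, r ≠ κ → (M : Matrix (Fin n) (Fin n) A) r κ = 0) →
      (∀ j, j ≠ κ → j ∉ s → (M : Matrix (Fin n) (Fin n) A) κ j = 0) →
      ∃ N, (N ∈ G n A → M ∈ G n A) ∧ Inv k N ∧
        (N : Matrix (Fin n) (Fin n) A) κ κ = 1 ∧
        (∀ r, r ≠ κ → (N : Matrix (Fin n) (Fin n) A) r κ = 0) ∧
        (∀ j, j ≠ κ → (N : Matrix (Fin n) (Fin n) A) κ j = 0) := by
  induction s using Finset.induction with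
  | empty =>
    intro M hInv hκκ hcol hrow
    exact ⟨M, id, hInv, hκκ, hcol, fun j hj => hrow j hj (Finset.notMem_empty j)⟩
  | @insert j s hj IH =>
    intro M hInv hκκ hcol hrow
    have hjκ : j ≠ κ := ne_of_gt (hs j (Finset.mem_insert_self j s))
    have hκj : κ ≠ j := Ne.symm hjκ
    have hjk : k < j.1 := by
      have := hs j (Finset.mem_insert_self j s)
      rw [Fin.lt_def, hκ] at this
      exact this
    set N1 := M * Elem κ j hκj (-((M : Matrix (Fin n) (Fin n) A) κ j)) with hN1
    -- entries of N1
    have hcoe : (N1 : Matrix (Fin n) (Fin n) A) =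
        (M : Matrix (Fin n) (Fin n) A) * transvection κ j (-((M : Matrix (Fin n) (Fin n) A) κ j)) := by
      rw [hN1, Matrix.SpecialLinearGroup.coe_mul, elem_coe]
    have he1 : ∀ r c, c ≠ j →
        (N1 : Matrix (Fin n) (Fin n) A) r c = (M : Matrix (Fin n) (Fin n) A) r c := by
      intro r c hc
      rw [hcoe, mul_transvection_apply_of_ne _ _ _ _ hc]
    have he2 : ∀ r, r ≠ κ →
        (N1 : Matrix (Fin n) (Fin n) A) r j = (M : Matrix (Fin n) (Fin n) A) r j := by
      intro r hr
      rw [hcoe, mul_transvection_apply_same, hcol r hr, mul_zero, add_zero]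
    have he3 : (N1 : Matrix (Fin n) (Fin n) A) κ j = 0 := by
      rw [hcoe, mul_transvection_apply_same, hκκ, mul_one, add_neg_cancel]
    have hInv1 : Inv k N1 := by
      intro r c hrc
      rcases eq_or_ne c j with rfl | hcj
      · rcases eq_or_ne r κ with rfl | hrκ
        · rw [he3]
          exact (Matrix.one_apply_ne (by rintro rfl; omega)).symm
        · rw [he2 r hrκ]
          exact hInv r c hrc
      · rw [he1 r c hcj]
        exact hInv r c hrc
    obtain ⟨N, hG, hInvN, h1, h2, h3⟩ := IH (fun x hx => hs x (Finset.mem_insert_of_mem hx)) N1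
      hInv1 (by rw [he1 κ κ hκj]; exact hκκ)
      (fun r hr => by rw [he1 r κ hκj]; exact hcol r hr)
      (by
        intro c hcκ hcs
        rcases eq_or_ne c j with rfl | hcj
        · exact he3
        · rw [he1 κ c hcj]
          exact hrow c hcκ (by simp [hcj, hcs]))
    exact ⟨N, fun h => of_right_mul hκj _ (hG h), hInvN, h1, h2, h3⟩

lemma main (d : ℕ) : ∀ (k : ℕ), k + d = n →
    ∀ M : Matrix.SpecialLinearGroup (Fin n) A, Inv k M → M ∈ G n A := by
  induction d with
  | zero =>
    intro k hk M hM
    have hM1 : M = 1 := by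
      apply Subtype.ext
      ext i j
      rw [Matrix.SpecialLinearGroup.coe_one]
      exact hM i j (Or.inl (by have := i.isLt; omega))
    rw [hM1]; exact one_mem _
  | succ d IH =>
    intro k hk M hM
    have hkn : k < n := by omega
    set κ : Fin n := ⟨k, hkn⟩ with hκdef
    have hκval : κ.1 = k := rfl
    obtain ⟨N, hNG, hNInv, hNcol⟩ := clearCol k κ rfl ({i | κ < i} : Finset (Fin n))
      (fun i hi => by simpa using hi) M hM
      (by
        intro i hiκ his
        have h1 : ¬ κ < i := by simpa using his
        have h2 : i.1 ≠ k := fun h => hiκ (Fin.ext h)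
        have hik : i.1 < k := by
          rw [Fin.lt_def, hκval] at h1; omega
        rw [hM i κ (Or.inl hik)]
        exact Matrix.one_apply_ne hiκ)
    apply hNG
    -- `N κ κ` is a unit
    have hdet : (adjugate (N : Matrix (Fin n) (Fin n) A) * (N : Matrix (Fin n) (Fin n) A)) κ κ
        = 1 := by
      rw [Matrix.adjugate_mul, Matrix.SpecialLinearGroup.det_coe]
      simp
    rw [Matrix.mul_apply, Finset.sum_eq_single κ
      (fun b _ hb => by rw [hNcol b hb, mul_zero])
      (fun h => absurd (Finset.mem_univ κ) h)] at hdet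
    by_cases hd : d = 0
    · -- `κ` is the last index : `N` is the identity
      subst hd
      have hother : ∀ i : Fin n, i.1 ≠ k → i.1 < k := by
        intro i hi
        have := i.isLt; omega
      have hone : ∀ i : Fin n, i ≠ κ → (N : Matrix (Fin n) (Fin n) A) i i = 1 := by
        intro i hi
        rw [hNInv i i (Or.inl (hother i (fun h => hi (Fin.ext h)))), Matrix.one_apply_eq]
      have hoff : ∀ i j : Fin n, i ≠ j → (N : Matrix (Fin n) (Fin n) A) i j = 0 := by
        intro i j hij
        rcases eq_or_ne i κ with rfl | hiκ
        · have hjk : j.1 < k := hother j (fun h => hij.symm (Fin.ext h))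
          rw [hNInv _ j (Or.inr hjk)]
          exact Matrix.one_apply_ne hij
        · rw [hNInv i j (Or.inl (hother i (fun h => hiκ (Fin.ext h))))]
          exact Matrix.one_apply_ne hij
      have hNκ : (N : Matrix (Fin n) (Fin n) A) κ κ = 1 := by
        have hdiag : (N : Matrix (Fin n) (Fin n) A) =
            Matrix.diagonal (fun i => (N : Matrix (Fin n) (Fin n) A) i i) := by
          ext i j
          rcases eq_or_ne i j with rfl | hij
          · rw [Matrix.diagonal_apply_eq]
          · rw [Matrix.diagonal_apply_ne _ hij, hoff i j hij]
        have hd2 : Matrix.det (N : Matrix (Fin n) (Fin n) A) =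
            ∏ i, (N : Matrix (Fin n) (Fin n) A) i i := by
          conv_lhs => rw [hdiag]
          rw [Matrix.det_diagonal]
        rw [Matrix.SpecialLinearGroup.det_coe, Finset.prod_eq_single κ
          (fun b _ hb => hone b hb) (fun h => absurd (Finset.mem_univ κ) h)] at hd2
        exact hd2.symm
      have : N = 1 := by
        apply Subtype.ext
        ext i j
        rw [Matrix.SpecialLinearGroup.coe_one]
        rcases eq_or_ne i j with rfl | hij
        · rcases eq_or_ne i κ with rfl | hiκ
          · rw [hNκ, Matrix.one_apply_eq]
          · rw [hone i hiκ, Matrix.one_apply_eq]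
        · rw [hoff i j hij]
          exact (Matrix.one_apply_ne hij).symm
      rw [this]; exact one_mem _
    · -- there is a further row `i0 = k+1`; normalize the pivot to `1`
      have hk1 : k + 1 < n := by omega
      set i0 : Fin n := ⟨k + 1, hk1⟩ with hi0def
      have hi0κ : i0 ≠ κ := by
        intro h
        have := congrArg Fin.val h
        simp [hi0def, hκdef] at this
      have hκi0 : κ ≠ i0 := Ne.symm hi0κ
      set cu := adjugate (N : Matrix (Fin n) (Fin n) A) κ κ with hcu
      set P1 := Elem i0 κ hi0κ cu * N with hP1
      have hP1q : (P1 : Matrix (Fin n) (Fin n) A) i0 κ = 1 := by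
        rw [hP1, Matrix.SpecialLinearGroup.coe_mul, elem_coe, transvection_mul_apply_same,
          hNcol i0 hi0κ, zero_add, hdet]
      have hP1p : (P1 : Matrix (Fin n) (Fin n) A) κ κ
          = (N : Matrix (Fin n) (Fin n) A) κ κ := by
        rw [hP1, Matrix.SpecialLinearGroup.coe_mul, elem_coe,
          transvection_mul_apply_of_ne _ _ _ _ hκi0]
      set P2 := Elem κ i0 hκi0 (1 - (N : Matrix (Fin n) (Fin n) A) κ κ) * P1 with hP2
      have hP2p : (P2 : Matrix (Fin n) (Fin n) A) κ κ = 1 := by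
        rw [hP2, Matrix.SpecialLinearGroup.coe_mul, elem_coe, transvection_mul_apply_same,
          hP1p, hP1q, mul_one]
        ring
      have hP2q : (P2 : Matrix (Fin n) (Fin n) A) i0 κ = 1 := by
        rw [hP2, Matrix.SpecialLinearGroup.coe_mul, elem_coe,
          transvection_mul_apply_of_ne _ _ _ _ hi0κ, hP1q]
      set P3 := Elem i0 κ hi0κ (-1) * P2 with hP3
      have hP3q : (P3 : Matrix (Fin n) (Fin n) A) i0 κ = 0 := by
        rw [hP3, Matrix.SpecialLinearGroup.coe_mul, elem_coe, transvection_mul_apply_same,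
          hP2p, hP2q]
        ring
      have hP3p : (P3 : Matrix (Fin n) (Fin n) A) κ κ = 1 := by
        rw [hP3, Matrix.SpecialLinearGroup.coe_mul, elem_coe,
          transvection_mul_apply_of_ne _ _ _ _ hκi0, hP2p]
      have hrel : Rel2 κ i0 N P3 :=
        ((rel2_left' hκi0 cu N).trans (rel2_left hκi0 _ P1)).trans (rel2_left' hκi0 (-1) P2)
      have hInv3 : Inv k P3 := by
        intro r c hrc
        rcases hrc with hr | hc
        · rw [hrel.2.1 r (by rintro rfl; omega) (by
            intro h
            have := congrArg Fin.val h
            simp [hi0def] at this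
            omega) c]
          exact hNInv r c (Or.inl hr)
        · have hκc : (N : Matrix (Fin n) (Fin n) A) κ c = 0 := by
            rw [hNInv κ c (Or.inr hc)]
            exact Matrix.one_apply_ne (by rintro rfl; omega)
          have hi0c : (N : Matrix (Fin n) (Fin n) A) i0 c = 0 := by
            rw [hNInv i0 c (Or.inr hc)]
            refine Matrix.one_apply_ne ?_
            intro h
            have := congrArg Fin.val h
            simp [hi0def] at this
            omega
          rcases eq_or_ne r κ with rfl | hrκ
          · rw [(hrel.2.2 c hκc hi0c).1]
            exact (Matrix.one_apply_ne (by rintro rfl; omega)).symm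
          rcases eq_or_ne r i0 with rfl | hri0
          · rw [(hrel.2.2 c hκc hi0c).2]
            refine (Matrix.one_apply_ne ?_).symm
            intro h
            have := congrArg Fin.val h
            simp [hi0def] at this
            omega
          · rw [hrel.2.1 r hrκ hri0 c]
            exact hNInv r c (Or.inr hc)
      have hcol3 : ∀ r, r ≠ κ → (P3 : Matrix (Fin n) (Fin n) A) r κ = 0 := by
        intro r hr
        rcases eq_or_ne r i0 with rfl | hri0
        · exact hP3q
        · rw [hrel.2.1 r hr hri0 κ]
          exact hNcol r hr
      obtain ⟨Q, hQG, hQInv, hQ1, hQcol, hQrow⟩ := clearRow k κ rfl ({j | κ < j} : Finset (Fin n))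
        (fun j hj => by simpa using hj) P3 hInv3 hP3p hcol3
        (by
          intro j hjκ hjs
          have h1 : ¬ κ < j := by simpa using hjs
          have h2 : j.1 ≠ k := fun h => hjκ (Fin.ext h)
          have hjk : j.1 < k := by
            rw [Fin.lt_def, hκval] at h1; omega
          rw [hInv3 κ j (Or.inr hjk)]
          exact Matrix.one_apply_ne (Ne.symm hjκ))
      apply hrel.1
      apply hQG
      refine IH (k + 1) (by omega) Q ?_
      have hrowfull : ∀ b : Fin n,
          (Q : Matrix (Fin n) (Fin n) A) κ b = (1 : Matrix (Fin n) (Fin n) A) κ b := by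
        intro b
        rcases eq_or_ne b κ with rfl | hb
        · rw [hQ1, Matrix.one_apply_eq]
        · rw [hQrow b hb]
          exact (Matrix.one_apply_ne (Ne.symm hb)).symm
      have hcolfull : ∀ a : Fin n,
          (Q : Matrix (Fin n) (Fin n) A) a κ = (1 : Matrix (Fin n) (Fin n) A) a κ := by
        intro a
        rcases eq_or_ne a κ with rfl | ha
        · rw [hQ1, Matrix.one_apply_eq]
        · rw [hQcol a ha]
          exact (Matrix.one_apply_ne ha).symm
      intro i j hij
      rcases hij with hi | hj
      · rcases Nat.lt_or_ge i.1 k with h | h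
        · exact hQInv i j (Or.inl h)
        · have hik : i = κ := Fin.ext (by omega)
          subst hik
          exact hrowfull j
      · rcases Nat.lt_or_ge j.1 k with h | h
        · exact hQInv i j (Or.inr h)
        · have hjk : j = κ := Fin.ext (by omega)
          subst hjk
          exact hcolfull i

end SLnGen

/-- For a euclidean domain `A`, `SL n A` is generated by the elementary matrices
`1 + a • e i j`, with `a ∈ A` and `i ≠ j`. -/
theorem SLn_euclidean_generated_by_elementary
    (n : ℕ) (hn : 2 ≤ n) (A : Type*) [EuclideanDomain A] :
    Subgroup.closure
      {M : Matrix.SpecialLinearGroup (Fin n) A |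
        ∃ (a : A) (i j : Fin n), i ≠ j ∧
          (M : Matrix (Fin n) (Fin n) A) = 1 + Matrix.single i j a} = ⊤ := by
  rw [eq_top_iff]
  intro M _
  exact SLnGen.main n 0 (Nat.zero_add n) M
    (fun i j h => by rcases h with h | h <;> exact absurd h (Nat.not_lt_zero _))
end

section
/- For every prime p dividing N, the principal congruence subgroup Γ(N) ≤ SL_n(ℤ) is residually p-finite. -/
open Matrix Finset

lemma pcs_aux_step (p : ℕ) (hp : p.Prime) {R : Type*} [Ring R] (A : R) (j : ℕ) (hj : 1 ≤ j)
    (h : (p : R) ^ j ∣ A - 1) : (p : R) ^ (j + 1) ∣ A ^ p - 1 := by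
  obtain ⟨B, hB⟩ := h
  have hA : A = (p : R) ^ j * B + 1 := by rw [← hB]; abel
  have hcom : Commute ((p : R) ^ j * B) (1 : R) := Commute.one_right _
  have hpow := hcom.add_pow p
  rw [← hA] at hpow
  have hs : A ^ p - 1 = ∑ i ∈ range p,
      ((p : R) ^ j * B) ^ (i + 1) * (p.choose (i + 1) : R) := by
    rw [hpow, Finset.sum_range_succ']
    simp
  rw [hs]
  apply Finset.dvd_sum
  intro i hi
  have hi' : i < p := Finset.mem_range.mp hi
  have hcB : Commute ((p : R) ^ j) B := (Nat.cast_commute p B).pow_left j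
  rw [hcB.mul_pow, ← pow_mul]
  have key : p ^ (j + 1) ∣ p ^ (j * (i + 1)) * p.choose (i + 1) := by
    rcases eq_or_lt_of_le (Nat.succ_le_of_lt hi') with heq | hlt
    · have heq' : i + 1 = p := heq
      apply Dvd.dvd.mul_right
      apply pow_dvd_pow
      have h2 := hp.two_le
      nlinarith
    · have h1 : p ∣ p.choose (i + 1) := hp.dvd_choose_self (Nat.succ_ne_zero i) hlt
      have h2 : p ^ j ∣ p ^ (j * (i + 1)) := pow_dvd_pow _ (by nlinarith)
      rw [pow_succ]
      exact mul_dvd_mul h2 h1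
  obtain ⟨c, hc⟩ := key
  rw [mul_assoc, ← (Nat.cast_commute (p.choose (i + 1)) (B ^ (i + 1))).eq, ← mul_assoc]
  have e2 : (p : R) ^ (j * (i + 1)) * (p.choose (i + 1) : R) = (p : R) ^ (j + 1) * (c : R) := by
    exact_mod_cast congrArg (Nat.cast : ℕ → R) hc
  rw [e2, mul_assoc]
  exact dvd_mul_right _ _

lemma pcs_aux_iter (p : ℕ) (hp : p.Prime) {R : Type*} [Ring R] (A : R)
    (h : (p : R) ∣ A - 1) : ∀ m : ℕ, (p : R) ^ (m + 1) ∣ A ^ p ^ m - 1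
  | 0 => by simpa using h
  | m + 1 => by
    have := pcs_aux_step p hp (A ^ p ^ m) (m + 1) (by omega) (pcs_aux_iter p hp A h m)
    rwa [← pow_mul, ← pow_succ] at this

/-- The principal congruence subgroup of level `N` in `SL n ℤ`. -/
def principalCongruenceSubgroup (n N : ℕ) :
    Subgroup (Matrix.SpecialLinearGroup (Fin n) ℤ) :=
  (Matrix.SpecialLinearGroup.map (n := Fin n) (Int.castRingHom (ZMod N))).ker

/-- For every prime `p` dividing `N`, the principal congruence subgroup
`Γ(N) ≤ SL n ℤ` is residually `p`-finite. -/
theorem principalCongruenceSubgroup_residually_p_finite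
    (n N p : ℕ) (hp : p.Prime) (hpN : p ∣ N) :
    ∀ A : principalCongruenceSubgroup n N, A ≠ 1 →
      ∃ (Q : Type) (_ : Group Q), Finite Q ∧ IsPGroup p Q ∧
        ∃ f : principalCongruenceSubgroup n N →* Q, f A ≠ 1 := by
  intro A hA
  -- find a nonzero entry of A - 1
  have hM : ((A : Matrix.SpecialLinearGroup (Fin n) ℤ) : Matrix (Fin n) (Fin n) ℤ)
      ≠ (1 : Matrix (Fin n) (Fin n) ℤ) := by
    intro h
    exact hA (Subtype.ext (Subtype.ext h))
  obtain ⟨i, j, hij⟩ : ∃ i j,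
      ((A : Matrix.SpecialLinearGroup (Fin n) ℤ) : Matrix (Fin n) (Fin n) ℤ) i j
        ≠ (1 : Matrix (Fin n) (Fin n) ℤ) i j := by
    by_contra h
    push_neg at h
    exact hM (Matrix.ext h)
  set M : Matrix (Fin n) (Fin n) ℤ :=
    ((A : Matrix.SpecialLinearGroup (Fin n) ℤ) : Matrix (Fin n) (Fin n) ℤ) with hMdef
  set d : ℤ := M i j - (1 : Matrix (Fin n) (Fin n) ℤ) i j with hddef
  have hd : d ≠ 0 := sub_ne_zero.mpr hij
  set k : ℕ := d.natAbs with hkdef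
  have hk1 : 1 ≤ k := Int.natAbs_pos.mpr hd
  have hk : ¬ ((p : ℤ) ^ k ∣ d) := by
    intro hdvd
    have h1 : p ^ k ∣ d.natAbs := by
      have := Int.natAbs_dvd_natAbs.mpr hdvd
      simpa [Int.natAbs_pow] using this
    have h2 : p ^ k ≤ k := Nat.le_of_dvd (by omega) h1
    have h3 : 2 ^ k ≤ p ^ k := Nat.pow_le_pow_left hp.two_le k
    have h4 : k < 2 ^ k := Nat.lt_two_pow_self
    omega
  haveI : NeZero (p ^ k) := ⟨pow_ne_zero _ hp.pos.ne'⟩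
  set φ := Matrix.SpecialLinearGroup.map (n := Fin n) (Int.castRingHom (ZMod (p ^ k))) with hφ
  set f0 : principalCongruenceSubgroup n N →*
      Matrix.SpecialLinearGroup (Fin n) (ZMod (p ^ k)) :=
    φ.comp (Subgroup.subtype _) with hf0
  -- key: every element of the image has p-power order
  have key : ∀ a : principalCongruenceSubgroup n N, (f0 a) ^ p ^ k = 1 := by
    intro a
    have hmem : Matrix.SpecialLinearGroup.map (n := Fin n) (Int.castRingHom (ZMod N)) a.1 = 1 :=
      a.2
    -- entrywise divisibility by N, hence by p
    have hdvd : ∀ x y : Fin n, (p : ℤ) ∣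
        ((a.1 : Matrix (Fin n) (Fin n) ℤ) - 1) x y := by
      intro x y
      have h1 : ((((a.1 : Matrix (Fin n) (Fin n) ℤ) x y : ℤ) : ZMod N))
          = ((1 : Matrix (Fin n) (Fin n) (ZMod N)) x y) := by
        have := congrArg (fun g : Matrix.SpecialLinearGroup (Fin n) (ZMod N) =>
          (g : Matrix (Fin n) (Fin n) (ZMod N)) x y) hmem
        simpa [Matrix.SpecialLinearGroup.map_apply_coe, RingHom.mapMatrix_apply, Matrix.map_apply]
          using this
      have hcast1 : (((1 : Matrix (Fin n) (Fin n) ℤ) x y : ℤ) : ZMod N)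
          = (1 : Matrix (Fin n) (Fin n) (ZMod N)) x y := by
        simp [Matrix.one_apply, apply_ite (fun z : ℤ => (z : ZMod N))]
      have h2 : (((((a.1 : Matrix (Fin n) (Fin n) ℤ) - 1) x y : ℤ)) : ZMod N) = 0 := by
        rw [Matrix.sub_apply, Int.cast_sub, h1, hcast1, sub_self]
      have h3 : (N : ℤ) ∣ (((a.1 : Matrix (Fin n) (Fin n) ℤ) - 1) x y) :=
        (ZMod.intCast_zmod_eq_zero_iff_dvd _ N).mp h2
      exact dvd_trans (Int.natCast_dvd_natCast.mpr hpN) h3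
    -- matrix-level divisibility
    have hdvdM : (p : Matrix (Fin n) (Fin n) ℤ) ∣
        ((a.1 : Matrix (Fin n) (Fin n) ℤ) - 1) := by
      refine ⟨Matrix.of fun x y => (((a.1 : Matrix (Fin n) (Fin n) ℤ) - 1) x y) / p, ?_⟩
      ext x y
      rw [← Matrix.diagonal_natCast, Matrix.diagonal_mul]
      exact (Int.mul_ediv_cancel' (hdvd x y)).symm
    have hiter := pcs_aux_iter p hp ((a.1 : Matrix (Fin n) (Fin n) ℤ)) (by simpa using hdvdM) k
    -- push through the reduction ring hom
    set ψ := (Int.castRingHom (ZMod (p ^ k))).mapMatrix (m := Fin n) with hψ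
    have h5 := map_dvd ψ hiter
    rw [map_sub, map_pow, map_pow, map_natCast, _root_.map_one] at h5
    have h6 : ((p : Matrix (Fin n) (Fin n) (ZMod (p ^ k)))) ^ (k + 1) = 0 := by
      have : ((p ^ (k + 1) : ℕ) : ZMod (p ^ k)) = 0 := by
        rw [ZMod.natCast_eq_zero_iff]
        exact pow_dvd_pow p (by omega)
      rw [← Nat.cast_pow, ← Matrix.diagonal_natCast, this]
      simp
    rw [h6, zero_dvd_iff, sub_eq_zero] at h5
    -- conclude in the special linear group
    apply Subtype.ext
    rw [Matrix.SpecialLinearGroup.coe_pow]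
    simpa [hf0, hφ, Matrix.SpecialLinearGroup.map_apply_coe, hψ] using h5
  refine ⟨f0.range, inferInstance, inferInstance, ?_, f0.rangeRestrict, ?_⟩
  · intro g
    obtain ⟨a, ha⟩ := g.2
    refine ⟨k, ?_⟩
    apply Subtype.ext
    rw [SubgroupClass.coe_pow]
    show (g : Matrix.SpecialLinearGroup (Fin n) (ZMod (p ^ k))) ^ p ^ k = 1
    rw [← ha]
    exact key a
  · intro hf1
    have h1 : f0 A = 1 := by
      have := congrArg (Subtype.val) hf1
      simpa using this
    have h2 : ((M i j : ℤ) : ZMod (p ^ k)) = ((1 : Matrix (Fin n) (Fin n) (ZMod (p ^ k))) i j) := by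
      have := congrArg (fun g : Matrix.SpecialLinearGroup (Fin n) (ZMod (p ^ k)) =>
        (g : Matrix (Fin n) (Fin n) (ZMod (p ^ k))) i j) h1
      simpa [hf0, hφ, Matrix.SpecialLinearGroup.map_apply_coe, RingHom.mapMatrix_apply, Matrix.map_apply,
        hMdef] using this
    have hcast1 : (((1 : Matrix (Fin n) (Fin n) ℤ) i j : ℤ) : ZMod (p ^ k))
        = (1 : Matrix (Fin n) (Fin n) (ZMod (p ^ k))) i j := by
      simp [Matrix.one_apply, apply_ite (fun z : ℤ => (z : ZMod (p ^ k)))]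
    have h3 : ((d : ℤ) : ZMod (p ^ k)) = 0 := by
      rw [hddef, Int.cast_sub, h2, hcast1, sub_self]
    have h4 : ((p ^ k : ℕ) : ℤ) ∣ d := (ZMod.intCast_zmod_eq_zero_iff_dvd _ _).mp h3
    apply hk
    exact_mod_cast h4
end

section
/- If F ⊆ F(u) is a field extension such that F(u) is finitely generated as a ring, then u is algebraic over F and F is finitely generated as a ring. -/
instance : IsJacobsonRing ℤ := by
  rw [isJacobsonRing_iff_prime_eq]
  intro P hP
  by_cases hbot : P = ⊥
  · subst hbot
    refine le_antisymm (fun x hx => ?_) Ideal.le_jacobson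
    have hu : IsUnit (x * x + 1) := Ideal.mem_jacobson_bot.mp hx x
    rcases Int.isUnit_iff.mp hu with h | h
    · have : x = 0 := by nlinarith
      simp [this]
    · exfalso; nlinarith
  · haveI : P.IsMaximal := IsPrime.to_maximal_ideal hbot
    exact Ideal.jacobson_eq_self_of_isMaximal

/-- A field which is finitely generated as a `ℤ`-module is finite. -/
lemma finite_of_field_module_finite_int (K : Type*) [Field K] [Module.Finite ℤ K] :
    Finite K := by
  have hint : Algebra.IsIntegral ℤ K := Algebra.IsIntegral.of_finite ℤ K
  set p := ringChar K with hp
  have hchar : CharP K p := ringChar.charP K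
  rcases CharP.char_is_prime_or_zero K p with hprime | hzero
  · haveI : Fact p.Prime := ⟨hprime⟩
    haveI : CharP K p := hchar
    haveI : Algebra (ZMod p) K := ZMod.algebra K p
    haveI : Module.Finite (ZMod p) K :=
      Module.Finite.of_restrictScalars_finite ℤ (ZMod p) K
    exact Module.finite_of_finite (ZMod p)
  · exfalso
    haveI : CharP K 0 := hzero ▸ hchar
    haveI : CharZero K := CharP.charP_to_charZero K
    have hinj : Function.Injective (algebraMap ℤ K) := by
      rw [algebraMap_int_eq]
      intro a b h
      simpa using h
    exact Int.not_isField ((hint.isField_iff_isField hinj).mpr (Field.toIsField K))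

/-- If `F ⊆ F(u)` is a field extension such that `F(u)` is finitely generated as a ring
(i.e. as a `ℤ`-algebra), then `u` is algebraic over `F` and `F` is finitely generated
as a ring. -/
theorem algebraic_of_adjoin_fg_as_ring {F E : Type*} [Field F] [Field E] [Algebra F E]
    (u : E) (hfg : (⊤ : Subalgebra ℤ (IntermediateField.adjoin F {u})).FG) :
    IsAlgebraic F u ∧ (⊤ : Subalgebra ℤ F).FG := by
  set K := IntermediateField.adjoin F {u} with hK
  haveI : Algebra.FiniteType ℤ K := ⟨hfg⟩
  haveI : Module.Finite ℤ K := finite_of_finite_type_of_isJacobsonRing ℤ K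
  haveI : Finite K := finite_of_field_module_finite_int K
  haveI : Finite F := Finite.of_injective (algebraMap F K) (algebraMap F K).injective
  haveI : Fintype F := Fintype.ofFinite F
  haveI : Module.Finite F K := Module.Finite.of_finite
  constructor
  · have hu : u ∈ K := IntermediateField.mem_adjoin_simple_self F u
    have : IsIntegral F (⟨u, hu⟩ : K) := IsIntegral.of_finite F _
    exact (IntermediateField.isIntegral_iff.mp this).isAlgebraic
  · refine ⟨Set.toFinset (Set.univ : Set F), ?_⟩
    rw [Set.coe_toFinset]
    exact eq_top_iff.mpr fun x _ => Algebra.subset_adjoin (Set.mem_univ x)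
end

section
/- Every finitely generated commutative domain which is a field is finite. -/
lemma int_isJacobsonRing_s18 : IsJacobsonRing ℤ := by
  rw [isJacobsonRing_iff_prime_eq]
  intro P hP
  by_cases hbot : P = ⊥
  · subst hbot
    refine le_antisymm (fun x hx => ?_) Ideal.le_jacobson
    rw [Ideal.mem_jacobson_bot] at hx
    have h := hx x
    rw [Int.isUnit_iff] at h
    rw [Ideal.mem_bot]
    rcases h with h | h
    · exact mul_self_eq_zero.mp (by omega)
    · exfalso; nlinarith [mul_self_nonneg x]
  · haveI : P.IsMaximal := hP.isMaximal hbot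
    exact Ideal.jacobson_eq_self_of_isMaximal

/-- Every finitely generated (as a `ℤ`-algebra) commutative domain which is a field
is finite. -/
theorem finite_of_fg_domain_isField {A : Type*} [CommRing A] [IsDomain A]
    (hfg : (⊤ : Subalgebra ℤ A).FG) (hfield : IsField A) : Finite A := by
  letI : Field A := hfield.toField
  haveI : Algebra.FiniteType ℤ A := ⟨hfg⟩
  haveI : IsJacobsonRing ℤ := int_isJacobsonRing_s18
  haveI : Module.Finite ℤ A := finite_of_finite_type_of_isJacobsonRing ℤ A
  haveI : Algebra.IsIntegral ℤ A := Algebra.IsIntegral.of_finite ℤ A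
  set p := ringChar A with hp
  haveI : CharP A p := ringChar.charP A
  have hp0 : p ≠ 0 := by
    intro h
    haveI : CharP A 0 := h ▸ ringChar.charP A
    haveI : CharZero A := CharP.charP_to_charZero A
    have hinj : Function.Injective (algebraMap ℤ A) := by
      intro a b hab
      have : (a : A) = (b : A) := by simpa [algebraMap_int_eq] using hab
      exact_mod_cast this
    exact Int.not_isField (isField_of_isIntegral_of_isField hinj hfield)
  haveI : NeZero p := ⟨hp0⟩
  letI : Algebra (ZMod p) A := ZMod.algebra A p
  haveI : Module.Finite (ZMod p) A :=
    Module.Finite.of_restrictScalars_finite ℤ (ZMod p) A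
  exact Module.finite_of_finite (ZMod p)
end

section
/- In a finitely generated commutative integral domain, the intersection of all maximal ideals is zero (the Jacobson radical is trivial). -/
instance inst_s19 : IsJacobsonRing ℤ := by
  rw [isJacobsonRing_iff_prime_eq]
  intro P hP
  rcases eq_or_ne P ⊥ with rfl | hne
  · refine le_antisymm ?_ Ideal.le_jacobson
    intro x hx
    have h := Ideal.mem_jacobson_bot.1 hx x
    rw [Int.isUnit_iff] at h
    rcases h with h | h <;> simp <;> nlinarith
  · haveI : P.IsMaximal := IsPrime.to_maximal_ideal hne
    exact Ideal.jacobson_eq_self_of_isMaximal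

/-- In a finitely generated (as a `ℤ`-algebra) commutative integral domain, the
intersection of all maximal ideals is zero. -/
theorem jacobson_radical_eq_bot_of_fg_domain {A : Type*} [CommRing A] [IsDomain A]
    (hfg : (⊤ : Subalgebra ℤ A).FG) :
    (⨅ (I : Ideal A) (_ : I.IsMaximal), I) = ⊥ := by
  haveI : Algebra.FiniteType ℤ A := ⟨hfg⟩
  haveI : IsJacobsonRing A := isJacobsonRing_of_finiteType (A := ℤ)
  have h := IsJacobsonRing.out ‹IsJacobsonRing A› (Ideal.bot_prime (α := A)).isRadical
  rw [Ideal.jacobson] at h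
  rw [← h, sInf_eq_iInf]
  exact iInf_congr fun I => by simp
end
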